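/- arXiv:2212.12802 — 6 statements merged into one kernel-verified Lean document; each statement's English description precedes it below -/
import Mathlib

section
/- If a distribution P over {0,1}^n is ε-far (in Hamming earth mover's distance) from every distribution supported on a subset of a set Π ⊆ {0,1}^n, then the probability that a sample x drawn from P has relative Hamming distance at least ε/2 from Π is at least ε/2. -/
open Finset
open scoped Classical

noncomputable section

/-- A probability distribution on a finite type, given as a mass function. -/
def IsDist {α : Type*} [Fintype α] (P : α → ℝ) : Prop :=
  (∀ x, 0 ≤ P x) ∧ ∑ x, P x = 1

/-- A coupling of two mass functions. -/
def IsCoupling {α : Type*} [Fintype α] (P Q : α → ℝ) (W : α → α → ℝ) : Prop :=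
  (∀ x y, 0 ≤ W x y) ∧ (∀ x, ∑ y, W x y = P x) ∧ (∀ y, ∑ x, W x y = Q y)

/-- Earth mover's distance with respect to a cost function `d`. -/
def emd {α : Type*} [Fintype α] (d : α → α → ℝ) (P Q : α → ℝ) : ℝ :=
  sInf {c : ℝ | ∃ W, IsCoupling P Q W ∧ c = ∑ x, ∑ y, W x y * d x y}

/-- Total variation distance. -/
def tv {α : Type*} [Fintype α] (P Q : α → ℝ) : ℝ :=
  (∑ x, |P x - Q x|) / 2

/-- Relative Hamming distance on `n`-bit strings. -/
def relHamming {n : ℕ} (x y : Fin n → Bool) : ℝ :=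
  (hammingDist x y : ℝ) / n

/-- Support size of a mass function. -/
def suppCard {α : Type*} [Fintype α] (P : α → ℝ) : ℕ :=
  (univ.filter fun x => P x ≠ 0).card

/-- Pushforward of a mass function along a map. -/
def push {α β : Type*} [Fintype α] (f : α → β) (P : α → ℝ) : β → ℝ :=
  fun y => ∑ x ∈ univ.filter (fun x => f x = y), P x

set_option maxHeartbeats 800000 in
/-- if `P` is ε-far (in Hamming EMD) from every distribution supported in `A`,
then with probability at least ε/2 a sample from `P` is (ε/2)-H-far from `A`. -/
theorem far_sample_far_from_set {n : ℕ} (hn : 0 < n) (ε : ℝ)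
    (P : (Fin n → Bool) → ℝ) (hP : IsDist P)
    (A : Finset (Fin n → Bool)) (hA : A.Nonempty)
    (hfar : ∀ Q : (Fin n → Bool) → ℝ, IsDist Q → (∀ x, Q x ≠ 0 → x ∈ A) →
      ε < emd relHamming P Q) :
    ε / 2 ≤ ∑ x ∈ univ.filter (fun x => ∀ y ∈ A, ε / 2 ≤ relHamming x y), P x := by
  classical
  set S := univ.filter (fun x : Fin n → Bool => ∀ y ∈ A, ε / 2 ≤ relHamming x y) with hS
  have hPnn := hP.1
  have hSnn : (0:ℝ) ≤ ∑ x ∈ S, P x := Finset.sum_nonneg fun x _ => hPnn x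
  by_cases hε : ε ≤ 0
  · linarith
  push_neg at hε
  -- nearest point map
  have hmin : ∀ x : Fin n → Bool, ∃ y ∈ A, ∀ z ∈ A, hammingDist x y ≤ hammingDist x z :=
    fun x => A.exists_min_image (fun y => hammingDist x y) hA
  choose f hfA hfmin using hmin
  set Q := push f P with hQ
  set W : (Fin n → Bool) → (Fin n → Bool) → ℝ := fun x y => if y = f x then P x else 0 with hW
  have hWnn : ∀ x y, 0 ≤ W x y := by
    intro x y; dsimp [W]; split
    · exact hPnn x
    · exact le_refl 0
  have hWc : IsCoupling P Q W := by
    refine ⟨hWnn, ?_, ?_⟩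
    · intro x; simp [W]
    · intro y
      simp only [Q, push, W]
      rw [Finset.sum_filter]
      exact Finset.sum_congr rfl fun x _ => by simp [eq_comm]
  have hQnn : ∀ y, 0 ≤ Q y := fun y => Finset.sum_nonneg fun x _ => hPnn x
  have hQd : IsDist Q := by
    refine ⟨hQnn, ?_⟩
    have : ∑ y, Q y = ∑ x, P x := by
      simp only [Q, push, Finset.sum_filter]
      rw [Finset.sum_comm]
      apply Finset.sum_congr rfl
      intro x _
      rw [Finset.sum_eq_single (f x)]
      · exact if_pos rfl
      · intro b _ hb
        exact if_neg (fun h => hb h.symm)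
      · intro h
        exact absurd (Finset.mem_univ _) h
    rw [this, hP.2]
  have hQA : ∀ y, Q y ≠ 0 → y ∈ A := by
    intro y hy
    by_contra h
    apply hy
    simp only [Q, push]
    apply Finset.sum_eq_zero
    intro x hx
    simp only [Finset.mem_filter] at hx
    exact absurd (hx.2 ▸ hfA x) h
  have hrel_nn : ∀ (x y : Fin n → Bool), 0 ≤ relHamming x y := by
    intro x y
    unfold relHamming
    positivity
  have hrel_le1 : ∀ (x y : Fin n → Bool), relHamming x y ≤ 1 := by
    intro x y
    unfold relHamming
    rw [div_le_one (by exact_mod_cast hn)]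
    exact_mod_cast (hammingDist_le_card_fintype).trans_eq (by simp)
  have hcost : emd relHamming P Q ≤ ∑ x, P x * relHamming x (f x) := by
    apply csInf_le
    · refine ⟨0, ?_⟩
      rintro c ⟨V, hV, rfl⟩
      exact Finset.sum_nonneg fun x _ => Finset.sum_nonneg fun y _ =>
        mul_nonneg (hV.1 x y) (hrel_nn x y)
    · refine ⟨W, hWc, ?_⟩
      apply Finset.sum_congr rfl
      intro x _
      simp [W, ite_mul]
  have hfarS : ∀ x ∈ S, relHamming x (f x) ≤ 1 := fun x _ => hrel_le1 x (f x)
  have hnearS : ∀ x ∈ Sᶜ, relHamming x (f x) ≤ ε / 2 := by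
    intro x hx
    simp only [hS, Finset.mem_compl, Finset.mem_filter, Finset.mem_univ, true_and,
      not_forall] at hx
    obtain ⟨y, hyA, hyd⟩ := hx
    push_neg at hyd
    have h1 : relHamming x (f x) ≤ relHamming x y := by
      unfold relHamming
      apply div_le_div_of_nonneg_right _ (by positivity)
      exact_mod_cast hfmin x y hyA
    linarith
  have hsplit : ∑ x, P x * relHamming x (f x)
      = ∑ x ∈ S, P x * relHamming x (f x) + ∑ x ∈ Sᶜ, P x * relHamming x (f x) :=
    (Finset.sum_add_sum_compl S _).symm
  have h1 : ∑ x ∈ S, P x * relHamming x (f x) ≤ ∑ x ∈ S, P x := by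
    apply Finset.sum_le_sum
    intro x hx
    calc P x * relHamming x (f x) ≤ P x * 1 :=
          mul_le_mul_of_nonneg_left (hfarS x hx) (hPnn x)
      _ = P x := mul_one _
  have h2 : ∑ x ∈ Sᶜ, P x * relHamming x (f x) ≤ ε / 2 := by
    have step : ∑ x ∈ Sᶜ, P x * relHamming x (f x) ≤ ∑ x ∈ Sᶜ, P x * (ε / 2) := by
      apply Finset.sum_le_sum
      intro x hx
      exact mul_le_mul_of_nonneg_left (hnearS x hx) (hPnn x)
    have hmass : ∑ x ∈ Sᶜ, P x ≤ 1 := by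
      rw [← hP.2]
      exact Finset.sum_le_sum_of_subset_of_nonneg (Finset.subset_univ _)
        (fun x _ _ => hPnn x)
    calc ∑ x ∈ Sᶜ, P x * relHamming x (f x) ≤ ∑ x ∈ Sᶜ, P x * (ε / 2) := step
      _ = (∑ x ∈ Sᶜ, P x) * (ε / 2) := (Finset.sum_mul _ _ _).symm
      _ ≤ 1 * (ε / 2) := mul_le_mul_of_nonneg_right hmass (by linarith)
      _ = ε / 2 := one_mul _
  have hlt := hfar Q hQd hQA
  linarith [hcost, hsplit ▸ hcost]
end
end

section
/- Every distribution over {0,1}^n is (⌊log₂ n⌋/n + 1/n)-close, in Hamming earth mover's distance, to some 2^n-grained distribution. -/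
open Finset
open scoped Classical

noncomputable section

section Aux
variable {α : Type*} [Fintype α]

lemma emd_le_cost {d : α → α → ℝ} (hd : ∀ x y, 0 ≤ d x y) {P Q : α → ℝ} (W : α → α → ℝ)
    (hW : IsCoupling P Q W) : emd d P Q ≤ ∑ x, ∑ y, W x y * d x y := by
  apply csInf_le
  · refine ⟨0, fun c hc => ?_⟩
    obtain ⟨W', hW', rfl⟩ := hc
    exact Finset.sum_nonneg fun x _ => Finset.sum_nonneg fun y _ =>
      mul_nonneg (hW'.1 x y) (hd x y)
  · exact ⟨W, hW, rfl⟩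

lemma coupling_comp {d : α → α → ℝ} (hd : ∀ x y, 0 ≤ d x y)
    (htri : ∀ x y z, d x z ≤ d x y + d y z)
    {P R Q : α → ℝ} {W1 W2 : α → α → ℝ}
    (h1 : IsCoupling P R W1) (h2 : IsCoupling R Q W2) :
    ∃ W, IsCoupling P Q W ∧
      ∑ x, ∑ y, W x y * d x y ≤ (∑ x, ∑ y, W1 x y * d x y) + ∑ x, ∑ y, W2 x y * d x y := by
  obtain ⟨h1n, h1a, h1b⟩ := h1
  obtain ⟨h2n, h2a, h2b⟩ := h2
  have hRnn : ∀ z, 0 ≤ R z := fun z => (h1b z) ▸ Finset.sum_nonneg fun x _ => h1n x z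
  have hW1z : ∀ x z, R z = 0 → W1 x z = 0 := by
    intro x z hz
    have := (Finset.sum_eq_zero_iff_of_nonneg (fun x' (_ : x' ∈ univ) => h1n x' z)).mp
      (by rw [h1b z, hz])
    exact this x (mem_univ x)
  have hW2z : ∀ z y, R z = 0 → W2 z y = 0 := by
    intro z y hz
    have := (Finset.sum_eq_zero_iff_of_nonneg (fun y' (_ : y' ∈ univ) => h2n z y')).mp
      (by rw [h2a z, hz])
    exact this y (mem_univ y)
  set W : α → α → ℝ := fun x y => ∑ z, if R z = 0 then 0 else W1 x z * W2 z y / R z with hWdef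
  have hWnn : ∀ x y, 0 ≤ W x y := by
    intro x y
    refine Finset.sum_nonneg fun z _ => ?_
    split
    · exact le_refl 0
    · exact div_nonneg (mul_nonneg (h1n x z) (h2n z y)) (hRnn z)
  refine ⟨W, ⟨hWnn, ?_, ?_⟩, ?_⟩
  · intro x
    rw [Finset.sum_comm]
    rw [← h1a x]
    refine Finset.sum_congr rfl fun z _ => ?_
    by_cases hz : R z = 0
    · simp [hz, hW1z x z hz]
    · simp only [if_neg hz]
      rw [← Finset.sum_div, ← Finset.mul_sum, h2a z, mul_div_assoc, div_self hz, mul_one]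
  · intro y
    rw [Finset.sum_comm]
    rw [← h2b y]
    refine Finset.sum_congr rfl fun z _ => ?_
    by_cases hz : R z = 0
    · simp [hz, hW2z z y hz]
    · simp only [if_neg hz]
      have : ∀ x, W1 x z * W2 z y / R z = W2 z y / R z * W1 x z := fun x => by ring
      simp_rw [this]
      rw [← Finset.mul_sum, h1b z, div_mul_eq_mul_div, mul_div_assoc, div_self hz, mul_one]
  · have key : ∀ x y, W x y * d x y ≤
        ∑ z, ((if R z = 0 then 0 else W1 x z * W2 z y / R z) * (d x z + d z y)) := by
      intro x y
      have hwxy : W x y = ∑ z, if R z = 0 then 0 else W1 x z * W2 z y / R z := rfl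
      rw [hwxy, Finset.sum_mul]
      refine Finset.sum_le_sum fun z _ => ?_
      by_cases hz : R z = 0
      · simp [hz]
      · simp only [if_neg hz]
        exact mul_le_mul_of_nonneg_left (htri x z y)
          (div_nonneg (mul_nonneg (h1n x z) (h2n z y)) (hRnn z))
    calc ∑ x, ∑ y, W x y * d x y
        ≤ ∑ x, ∑ y, ∑ z, ((if R z = 0 then 0 else W1 x z * W2 z y / R z) * (d x z + d z y)) := by
          exact Finset.sum_le_sum fun x _ => Finset.sum_le_sum fun y _ => key x y
      _ = (∑ x, ∑ y, ∑ z, (if R z = 0 then 0 else W1 x z * W2 z y / R z) * d x z)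
          + ∑ x, ∑ y, ∑ z, (if R z = 0 then 0 else W1 x z * W2 z y / R z) * d z y := by
          simp_rw [mul_add, Finset.sum_add_distrib]
      _ = (∑ x, ∑ y, W1 x y * d x y) + ∑ x, ∑ y, W2 x y * d x y := by
          congr 1
          · refine Finset.sum_congr rfl fun x _ => ?_
            rw [Finset.sum_comm]
            refine Finset.sum_congr rfl fun z _ => ?_
            by_cases hz : R z = 0
            · simp [hz, hW1z x z hz]
            · simp only [if_neg hz]
              have h3 : ∀ y, W1 x z * W2 z y / R z * d x z = W1 x z * d x z / R z * W2 z y :=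
                fun y => by ring
              simp_rw [h3]
              rw [← Finset.mul_sum, h2a z, div_mul_eq_mul_div, mul_div_assoc, div_self hz,
                mul_one]
          · rw [Finset.sum_comm]
            have h4 : ∀ y, (∑ x, ∑ z, (if R z = 0 then 0 else W1 x z * W2 z y / R z) * d z y)
                = ∑ z, W2 z y * d z y := by
              intro y
              rw [Finset.sum_comm]
              refine Finset.sum_congr rfl fun z _ => ?_
              by_cases hz : R z = 0
              · simp [hz, hW2z z y hz]
              · simp only [if_neg hz]
                have h5 : ∀ x, W1 x z * W2 z y / R z * d z y = W2 z y * d z y / R z * W1 x z :=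
                  fun x => by ring
                simp_rw [h5]
                rw [← Finset.mul_sum, h1b z, div_mul_eq_mul_div, mul_div_assoc, div_self hz,
                  mul_one]
            simp_rw [h4]
            exact Finset.sum_comm

lemma tv_coupling {d : α → α → ℝ} (hdd : ∀ x, d x x = 0) (hd1 : ∀ x y, d x y ≤ 1)
    {P Q : α → ℝ} (hP : IsDist P) (hQ : IsDist Q) :
    ∃ W, IsCoupling P Q W ∧ ∑ x, ∑ y, W x y * d x y ≤ (∑ x, |P x - Q x|) / 2 := by
  set m : α → ℝ := fun x => min (P x) (Q x) with hm
  have hPm : ∀ x, 0 ≤ P x - m x := fun x => by simp [hm, min_le_left]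
  have hQm : ∀ x, 0 ≤ Q x - m x := fun x => by simp [hm, min_le_right]
  set T : ℝ := ∑ x, (P x - m x) with hT
  have hT2 : T = ∑ x, (Q x - m x) := by
    rw [hT]
    rw [Finset.sum_sub_distrib, Finset.sum_sub_distrib, hP.2, hQ.2]
  have habs : ∀ x, |P x - Q x| = (P x - m x) + (Q x - m x) := by
    intro x
    rcases le_total (P x) (Q x) with h | h
    · rw [abs_of_nonpos (by linarith)]
      simp [hm, min_eq_left h]
    · rw [abs_of_nonneg (by linarith)]
      simp [hm, min_eq_right h]
  have hTabs : ∑ x, |P x - Q x| = 2 * T := by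
    simp_rw [habs]
    rw [Finset.sum_add_distrib, ← hT, ← hT2]
    ring
  have hTnn : 0 ≤ T := Finset.sum_nonneg fun x _ => hPm x
  by_cases hT0 : T = 0
  · -- P = Q
    have hPQ : ∀ x, P x = Q x := by
      intro x
      have h1 : P x - m x = 0 := by
        have := (Finset.sum_eq_zero_iff_of_nonneg (fun x (_ : x ∈ univ) => hPm x)).mp
          (hT ▸ hT0)
        exact this x (mem_univ x)
      have h2 : Q x - m x = 0 := by
        have := (Finset.sum_eq_zero_iff_of_nonneg (fun x (_ : x ∈ univ) => hQm x)).mp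
          (hT2 ▸ hT0)
        exact this x (mem_univ x)
      linarith
    refine ⟨fun x y => if x = y then P x else 0, ⟨?_, ?_, ?_⟩, ?_⟩
    · intro x y; dsimp only; split
      · exact hP.1 x
      · exact le_refl 0
    · intro x; simp
    · intro y
      rw [← hPQ y]
      simp [Finset.sum_ite_eq]
    · have : ∀ x, ∑ y, (if x = y then P x else 0) * d x y = 0 := by
        intro x
        rw [Finset.sum_eq_zero]
        intro y _
        by_cases h : x = y
        · subst h; simp [hdd]
        · simp [h]
      simp_rw [this]
      simp
      positivity
  · have hTpos : 0 < T := lt_of_le_of_ne hTnn (Ne.symm hT0)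
    refine ⟨fun x y => (if x = y then m x else 0) + (P x - m x) * (Q y - m y) / T,
      ⟨?_, ?_, ?_⟩, ?_⟩
    · intro x y
      have : 0 ≤ (if x = y then m x else 0) := by
        split
        · exact le_min (hP.1 x) (hQ.1 x)
        · exact le_refl 0
      have h2 : 0 ≤ (P x - m x) * (Q y - m y) / T :=
        div_nonneg (mul_nonneg (hPm x) (hQm y)) hTnn
      linarith
    · intro x
      rw [Finset.sum_add_distrib]
      have e1 : ∑ y, (if x = y then m x else 0) = m x := by simp
      have e2 : ∑ y, (P x - m x) * (Q y - m y) / T = P x - m x := by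
        simp_rw [div_eq_mul_inv, mul_assoc]
        rw [← Finset.mul_sum]
        have : ∑ y, (Q y - m y) * T⁻¹ = 1 := by
          rw [← Finset.sum_mul, ← hT2, mul_inv_cancel₀ hT0]
        rw [this, mul_one]
      rw [e1, e2]; ring
    · intro y
      rw [Finset.sum_add_distrib]
      have e1 : ∑ x, (if x = y then m x else 0) = m y := by
        rw [Finset.sum_ite_eq' univ y m]
        simp
      have e2 : ∑ x, (P x - m x) * (Q y - m y) / T = Q y - m y := by
        have : ∀ x, (P x - m x) * (Q y - m y) / T = (Q y - m y) / T * (P x - m x) :=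
          fun x => by ring
        simp_rw [this]
        rw [← Finset.mul_sum, ← hT]
        exact div_mul_cancel₀ _ hT0
      rw [e1, e2]; ring
    · rw [hTabs]
      have hle : ∀ x y, ((if x = y then m x else 0) + (P x - m x) * (Q y - m y) / T) * d x y
          ≤ (P x - m x) * (Q y - m y) / T := by
        intro x y
        by_cases h : x = y
        · subst h
          simp only [hdd, mul_zero]
          exact div_nonneg (mul_nonneg (hPm x) (hQm x)) hTnn
        · simp only [if_neg h, zero_add]
          have hnn : 0 ≤ (P x - m x) * (Q y - m y) / T :=
            div_nonneg (mul_nonneg (hPm x) (hQm y)) hTnn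
          calc (P x - m x) * (Q y - m y) / T * d x y
              ≤ (P x - m x) * (Q y - m y) / T * 1 := by
                exact mul_le_mul_of_nonneg_left (hd1 x y) hnn
            _ = (P x - m x) * (Q y - m y) / T := by ring
      calc ∑ x, ∑ y, ((if x = y then m x else 0) + (P x - m x) * (Q y - m y) / T) * d x y
          ≤ ∑ x, ∑ y, (P x - m x) * (Q y - m y) / T :=
            Finset.sum_le_sum fun x _ => Finset.sum_le_sum fun y _ => hle x y
        _ = T := by
            have e : ∀ x, ∑ y, (P x - m x) * (Q y - m y) / T = P x - m x := by
              intro x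
              simp_rw [div_eq_mul_inv, mul_assoc]
              rw [← Finset.mul_sum]
              have : ∑ y, (Q y - m y) * T⁻¹ = 1 := by
                rw [← Finset.sum_mul, ← hT2, mul_inv_cancel₀ hT0]
              rw [this, mul_one]
            simp_rw [e]
            exact hT.symm
        _ = 2 * T / 2 := by ring

lemma round_exists (s : Finset α) (p : α → ℝ) (N : ℕ) (hN : 0 < N)
    (hp0 : ∀ x, 0 ≤ p x) (hsupp : ∀ x, x ∉ s → p x = 0) (hsum : ∑ x, p x = 1) :
    ∃ q : α → ℝ, (∀ x, 0 ≤ q x) ∧ (∀ x, ∃ k : ℕ, q x = (k : ℝ) / N) ∧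
      (∑ x, q x = 1) ∧ ∑ x, |p x - q x| ≤ s.card / N := by
  have hNR : (0:ℝ) < N := by exact_mod_cast hN
  have hsum_s : ∑ x ∈ s, p x = 1 := by
    rw [← hsum]
    exact Finset.sum_subset (subset_univ s) (fun x _ hx => hsupp x hx)
  set F : α → ℕ := fun x => ⌊p x * N⌋₊ with hF
  set f : α → ℝ := fun x => p x * N - F x with hf
  have hf0 : ∀ x, 0 ≤ f x := by
    intro x
    simp only [hf, hF, sub_nonneg]
    exact Nat.floor_le (mul_nonneg (hp0 x) hNR.le)
  have hf1 : ∀ x, f x < 1 := by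
    intro x
    simp only [hf, hF, sub_lt_iff_lt_add']
    exact Nat.lt_floor_add_one _
  have hpf : ∀ x, p x = ((F x : ℝ) + f x) / N := by
    intro x
    simp only [hf]
    field_simp
    ring
  have hFsum : (∑ x ∈ s, (F x : ℝ)) + ∑ x ∈ s, f x = N := by
    rw [← Finset.sum_add_distrib]
    have : ∀ x ∈ s, (F x : ℝ) + f x = p x * N := by
      intro x _; simp only [hf]; ring
    rw [Finset.sum_congr rfl this, ← Finset.sum_mul, hsum_s, one_mul]
  have hFle : ∑ x ∈ s, F x ≤ N := by
    have h1 : (∑ x ∈ s, (F x : ℝ)) ≤ N := by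
      have h2 : 0 ≤ ∑ x ∈ s, f x := Finset.sum_nonneg fun x _ => hf0 x
      linarith
    exact_mod_cast (by push_cast at h1 ⊢; exact h1 : ((∑ x ∈ s, F x : ℕ) : ℝ) ≤ (N:ℝ))
  set k : ℕ := N - ∑ x ∈ s, F x with hkdef
  have hk : (k : ℝ) = ∑ x ∈ s, f x := by
    have : (k : ℝ) = (N : ℝ) - ∑ x ∈ s, (F x : ℝ) := by
      rw [hkdef]
      push_cast [Nat.cast_sub hFle]
      ring
    linarith
  have hsne : s.Nonempty := by
    by_contra h
    rw [Finset.not_nonempty_iff_eq_empty] at h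
    rw [h] at hsum_s
    simp at hsum_s
  have hklt : k < s.card := by
    have h1 : (k:ℝ) < s.card := by
      rw [hk]
      calc ∑ x ∈ s, f x < ∑ x ∈ s, 1 := Finset.sum_lt_sum_of_nonempty hsne fun x _ => hf1 x
        _ = s.card := by simp
    exact_mod_cast h1
  have hkle : k ≤ s.card := hklt.le
  -- choose the set C of indices to round up
  set A : Finset α := s.filter (fun x => (1:ℝ)/2 ≤ f x) with hA
  have hAs : A ⊆ s := Finset.filter_subset _ _
  have hC : ∃ C : Finset α, C ⊆ s ∧ C.card = k ∧
      ((∀ x ∈ C, (1:ℝ)/2 ≤ f x) ∨ (∀ x ∈ s, x ∉ C → f x < 1/2)) := by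
    by_cases h : k ≤ A.card
    · obtain ⟨C, hCA, hCc⟩ := Finset.exists_subset_card_eq h
      exact ⟨C, hCA.trans hAs, hCc, Or.inl fun x hx => (Finset.mem_filter.mp (hCA hx)).2⟩
    · push_neg at h
      have hsA : k - A.card ≤ (s \ A).card := by
        rw [Finset.card_sdiff_of_subset hAs]
        omega
      obtain ⟨B, hB, hBc⟩ := Finset.exists_subset_card_eq hsA
      refine ⟨A ∪ B, Finset.union_subset hAs (hB.trans (Finset.sdiff_subset)), ?_, Or.inr ?_⟩
      · rw [Finset.card_union_of_disjoint]
        · omega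
        · exact Finset.disjoint_left.mpr fun x hxA hxB =>
            (Finset.mem_sdiff.mp (hB hxB)).2 hxA
      · intro x hxs hxC
        have hxA : x ∉ A := fun hxA => hxC (Finset.mem_union_left _ hxA)
        by_contra hcon
        push_neg at hcon
        exact hxA (Finset.mem_filter.mpr ⟨hxs, hcon⟩)
  obtain ⟨C, hCs, hCc, hCcase⟩ := hC
  set q : α → ℝ := fun x => if x ∈ s then ((F x + if x ∈ C then 1 else 0 : ℕ) : ℝ) / N else 0
    with hq
  have hq0 : ∀ x, 0 ≤ q x := by
    intro x
    simp only [hq]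
    split
    · positivity
    · exact le_refl 0
  have hqgr : ∀ x, ∃ j : ℕ, q x = (j : ℝ) / N := by
    intro x
    simp only [hq]
    split
    · exact ⟨_, rfl⟩
    · exact ⟨0, by simp⟩
  have hCsum : ∑ x ∈ s, ((if x ∈ C then 1 else 0 : ℕ) : ℝ) = k := by
    rw [← hCc]
    rw [Finset.sum_congr rfl (fun x _ => by push_cast; rfl)]
    rw [Finset.sum_ite_mem]
    rw [Finset.inter_eq_right.mpr hCs]
    simp
  have hqsum : ∑ x, q x = 1 := by
    have : ∑ x, q x = ∑ x ∈ s, q x :=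
      (Finset.sum_subset (subset_univ s) (fun x _ hx => by simp [hq, hx])).symm
    rw [this]
    have e : ∀ x ∈ s, q x = ((F x : ℝ) + ((if x ∈ C then 1 else 0 : ℕ) : ℝ)) / N := by
      intro x hx
      simp only [hq, if_pos hx]
      push_cast
      ring
    rw [Finset.sum_congr rfl e, ← Finset.sum_div, Finset.sum_add_distrib, hCsum]
    rw [div_eq_one_iff_eq (ne_of_gt hNR)]
    linarith [hFsum, hk]
  refine ⟨q, hq0, hqgr, hqsum, ?_⟩
  have hmov : ∑ x, |p x - q x| = (∑ x ∈ s, |f x - ((if x ∈ C then 1 else 0 : ℕ) : ℝ)|) / N := by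
    have h0 : ∑ x, |p x - q x| = ∑ x ∈ s, |p x - q x| :=
      (Finset.sum_subset (subset_univ s) (fun x _ hx => by
        simp [hq, hx, hsupp x hx])).symm
    rw [h0, Finset.sum_div]
    refine Finset.sum_congr rfl fun x hx => ?_
    rw [hpf x]
    simp only [hq, if_pos hx]
    rw [show ((F x : ℝ) + f x) / N - ((F x + if x ∈ C then 1 else 0 : ℕ) : ℝ) / N
        = (f x - ((if x ∈ C then 1 else 0 : ℕ) : ℝ)) / N by push_cast; ring]
    rw [abs_div, abs_of_pos hNR]
  rw [hmov]
  have hkcard : (k:ℝ) ≤ s.card := by exact_mod_cast hkle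
  have hbound : ∑ x ∈ s, |f x - ((if x ∈ C then 1 else 0 : ℕ) : ℝ)| ≤ (s.card : ℝ) := by
    have hsplit : (∑ x ∈ s \ C, |f x - ((if x ∈ C then 1 else 0 : ℕ) : ℝ)|)
        + ∑ x ∈ C, |f x - ((if x ∈ C then 1 else 0 : ℕ) : ℝ)|
        = ∑ x ∈ s, |f x - ((if x ∈ C then 1 else 0 : ℕ) : ℝ)| :=
      Finset.sum_sdiff hCs
    have e1 : ∑ x ∈ s \ C, |f x - ((if x ∈ C then 1 else 0 : ℕ) : ℝ)|
        = ∑ x ∈ s \ C, f x := by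
      refine Finset.sum_congr rfl fun x hx => ?_
      rw [if_neg (Finset.mem_sdiff.mp hx).2]
      simp [abs_of_nonneg (hf0 x)]
    have e2 : ∑ x ∈ C, |f x - ((if x ∈ C then 1 else 0 : ℕ) : ℝ)|
        = ∑ x ∈ C, (1 - f x) := by
      refine Finset.sum_congr rfl fun x hx => ?_
      rw [if_pos hx]
      push_cast
      rw [abs_of_nonpos (by linarith [hf1 x])]
      ring
    have hsumf : (∑ x ∈ s \ C, f x) + ∑ x ∈ C, f x = (k:ℝ) := by
      rw [hk]
      exact Finset.sum_sdiff hCs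
    have hsC : ∑ x ∈ C, (1 - f x) = (k:ℝ) - ∑ x ∈ C, f x := by
      rw [Finset.sum_sub_distrib, Finset.sum_const, hCc]
      simp
    rw [← hsplit, e1, e2]
    rcases hCcase with hbig | hsmall
    · have hhalf : (k:ℝ)/2 ≤ ∑ x ∈ C, f x := by
        calc (k:ℝ)/2 = ∑ _x ∈ C, (1:ℝ)/2 := by
              rw [Finset.sum_const, hCc, nsmul_eq_mul]; ring
          _ ≤ ∑ x ∈ C, f x := Finset.sum_le_sum fun x hx => hbig x hx
      rw [hsC]
      linarith
    · have h1 : ∑ x ∈ s \ C, f x ≤ ((s.card : ℝ) - k)/2 := by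
        calc ∑ x ∈ s \ C, f x ≤ ∑ _x ∈ s \ C, (1:ℝ)/2 :=
            Finset.sum_le_sum fun x hx =>
              (hsmall x (Finset.mem_sdiff.mp hx).1 (Finset.mem_sdiff.mp hx).2).le
          _ = ((s \ C).card : ℝ) * (1/2 : ℝ) := by rw [Finset.sum_const, nsmul_eq_mul]
          _ = ((s.card:ℝ) - k)/2 := by
              rw [Finset.card_sdiff_of_subset hCs, hCc, Nat.cast_sub hkle]
              ring
      rw [hsC]
      have hk0 : (0:ℝ) ≤ (k:ℝ) := Nat.cast_nonneg k
      linarith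
  gcongr

end Aux

lemma push_sum_eq {α β : Type*} [Fintype α] [Fintype β] (f : α → β) (P : α → ℝ) :
    ∑ y, push f P y = ∑ x, P x := by
  unfold push
  exact Finset.sum_fiberwise_of_maps_to (fun x _ => mem_univ (f x)) P

lemma push_eq_sum_ite {α β : Type*} [Fintype α] (f : α → β) (P : α → ℝ) (y : β) :
    push f P y = ∑ x, if f x = y then P x else 0 := by
  unfold push
  exact Finset.sum_filter _ _

/-- every distribution over `{0,1}^n` is `(⌊log₂ n⌋/n + 1/n)`-close in
Hamming EMD to some `2^n`-grained distribution. -/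
theorem close_to_grained {n : ℕ} (hn : 0 < n)
    (P : (Fin n → Bool) → ℝ) (hP : IsDist P) :
    ∃ Q : (Fin n → Bool) → ℝ, IsDist Q ∧
      (∀ x, ∃ k : ℕ, Q x = (k : ℝ) / 2 ^ n) ∧
      emd relHamming P Q ≤ (Nat.log 2 n : ℝ) / n + 1 / n := by
  classical
  set ℓ : ℕ := Nat.log 2 n with hℓ
  have hℓn : ℓ ≤ n := Nat.log_le_self 2 n
  set g : (Fin n → Bool) → (Fin n → Bool) := fun x i => if (i : ℕ) < ℓ then false else x i
    with hg
  set s : Finset (Fin n → Bool) :=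
    univ.filter (fun y => ∀ i : Fin n, (i:ℕ) < ℓ → y i = false) with hs
  have hnR : (0:ℝ) < n := by exact_mod_cast hn
  have hd0 : ∀ x y : Fin n → Bool, 0 ≤ relHamming x y := fun x y => by
    unfold relHamming; positivity
  have hd1 : ∀ x y : Fin n → Bool, relHamming x y ≤ 1 := by
    intro x y
    unfold relHamming
    rw [div_le_one hnR]
    have h : hammingDist x y ≤ n := by
      simpa using (hammingDist_le_card_fintype : hammingDist x y ≤ Fintype.card (Fin n))
    exact_mod_cast h
  have hdd : ∀ x : Fin n → Bool, relHamming x x = 0 := fun x => by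
    unfold relHamming; simp
  have htri : ∀ x y z : Fin n → Bool, relHamming x z ≤ relHamming x y + relHamming y z := by
    intro x y z
    unfold relHamming
    rw [← add_div]
    have h : (hammingDist x z : ℝ) ≤ (hammingDist x y : ℝ) + hammingDist y z := by
      exact_mod_cast hammingDist_triangle x y z
    gcongr
  have hgs : ∀ x, g x ∈ s := by
    intro x
    simp only [hs, mem_filter, mem_univ, true_and]
    intro i hi
    simp [hg, hi]
  have hP'nn : ∀ y, 0 ≤ push g P y := fun y => Finset.sum_nonneg fun x _ => hP.1 x
  have hP'sum : ∑ y, push g P y = 1 := by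
    rw [push_sum_eq g P]
    exact hP.2
  have hP'supp : ∀ y, y ∉ s → push g P y = 0 := by
    intro y hy
    rw [push_eq_sum_ite g P y]
    apply Finset.sum_eq_zero
    intro x _
    by_cases h : g x = y
    · exact absurd (h ▸ hgs x) hy
    · rw [if_neg h]
  -- hamming bound for the projection
  have hham : ∀ x, (hammingDist x (g x) : ℝ) ≤ ℓ := by
    intro x
    have h1 : hammingDist x (g x) ≤ ℓ := by
      have hsub : (univ.filter fun i => x i ≠ g x i)
          ⊆ (univ.filter fun i : Fin n => (i:ℕ) < ℓ) := by
        intro i hi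
        simp only [mem_filter, mem_univ, true_and] at hi ⊢
        by_contra h
        exact hi (show x i = g x i by simp [hg, h])
      have hcard : (univ.filter fun i : Fin n => (i:ℕ) < ℓ).card ≤ ℓ := by
        have h2 : (univ.filter fun i : Fin n => (i:ℕ) < ℓ).card ≤ (Finset.range ℓ).card := by
          apply Finset.card_le_card_of_injOn (fun i : Fin n => (i:ℕ))
          · intro i hi
            simp only [mem_filter, Finset.mem_coe] at hi
            exact Finset.mem_range.mpr hi.2
          · intro a _ b _ h
            exact Fin.val_injective h
        simpa using h2
      exact le_trans (Finset.card_le_card hsub) hcard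
    exact_mod_cast h1
  -- rounding
  obtain ⟨Q, hQ0, hQgr, hQsum, hQmov⟩ := round_exists s (push g P) (2^n)
    (pow_pos (by norm_num) n) hP'nn hP'supp hP'sum
  have hQgr' : ∀ x, ∃ k : ℕ, Q x = (k:ℝ) / 2^n := by
    intro x
    obtain ⟨k, hk⟩ := hQgr x
    exact ⟨k, by rw [hk]; norm_num⟩
  -- coupling 1
  set W1 : (Fin n → Bool) → (Fin n → Bool) → ℝ := fun x y => if y = g x then P x else 0
    with hW1
  have hW1c : IsCoupling P (push g P) W1 := by
    refine ⟨?_, ?_, ?_⟩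
    · intro x y
      have hrfl : W1 x y = if y = g x then P x else 0 := rfl
      rw [hrfl]; split
      · exact hP.1 x
      · exact le_refl 0
    · intro x; simp [hW1]
    · intro y
      rw [push_eq_sum_ite g P y]
      refine Finset.sum_congr rfl fun x _ => ?_
      have hrfl : W1 x y = if y = g x then P x else 0 := rfl
      rw [hrfl]
      by_cases h : g x = y
      · rw [if_pos h, if_pos h.symm]
      · rw [if_neg h, if_neg (Ne.symm h)]
  have hcost1 : ∑ x, ∑ y, W1 x y * relHamming x y ≤ (ℓ:ℝ)/n := by
    have e : ∀ x, ∑ y, W1 x y * relHamming x y = P x * relHamming x (g x) := by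
      intro x
      simp only [hW1, ite_mul, zero_mul]
      rw [Finset.sum_ite_eq' univ (g x) (fun y => P x * relHamming x y)]
      simp
    simp_rw [e]
    calc ∑ x, P x * relHamming x (g x) ≤ ∑ x, P x * ((ℓ:ℝ)/n) := by
          apply Finset.sum_le_sum
          intro x _
          apply mul_le_mul_of_nonneg_left _ (hP.1 x)
          unfold relHamming
          gcongr
          exact_mod_cast hham x
      _ = (ℓ:ℝ)/n := by rw [← Finset.sum_mul, hP.2, one_mul]
  -- coupling 2
  obtain ⟨W2, hW2c, hW2cost⟩ := tv_coupling hdd hd1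
    (⟨hP'nn, hP'sum⟩ : IsDist (push g P)) (⟨hQ0, hQsum⟩ : IsDist Q)
  -- compose
  obtain ⟨W, hWc, hWcost⟩ := coupling_comp hd0 htri hW1c hW2c
  -- cardinality bound
  have hscard : s.card ≤ 2^(n-ℓ) := by
    have hinj : Set.InjOn (fun y : Fin n → Bool => fun i : {i : Fin n // ℓ ≤ (i:ℕ)} => y i.1)
        ↑s := by
      intro y1 h1 y2 h2 h
      simp only [hs, coe_filter, Set.mem_setOf_eq] at h1 h2
      funext i
      by_cases hi : (i:ℕ) < ℓ
      · rw [h1.2 i hi, h2.2 i hi]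
      · exact congrFun h ⟨i, le_of_not_gt hi⟩
    have h4 := Finset.card_le_card_of_injOn _ (fun y (_ : y ∈ s) =>
      Finset.mem_univ (fun i : {i : Fin n // ℓ ≤ (i:ℕ)} => y i.1)) hinj
    rw [Finset.card_univ] at h4
    have hsubcard : Fintype.card {i : Fin n // ℓ ≤ (i:ℕ)} ≤ n - ℓ := by
      have hinj2 : Function.Injective (fun i : {i : Fin n // ℓ ≤ (i:ℕ)} =>
          (⟨(i.1 : ℕ) - ℓ, by have := i.1.isLt; have := i.2; omega⟩ : Fin (n - ℓ))) := by
        intro a b hab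
        have h5 := congrArg Fin.val hab
        simp only at h5
        have ha := a.2; have hb := b.2
        apply Subtype.ext; apply Fin.ext
        omega
      have h6 := Fintype.card_le_of_injective _ hinj2
      simpa using h6
    have h7 : Fintype.card ({i : Fin n // ℓ ≤ (i:ℕ)} → Bool) ≤ 2^(n-ℓ) := by
      rw [Fintype.card_fun, Fintype.card_bool]
      exact Nat.pow_le_pow_right (by norm_num) hsubcard
    exact h4.trans h7
  have hns : n * s.card ≤ 2 * 2^n := by
    calc n * s.card ≤ n * 2^(n-ℓ) := Nat.mul_le_mul_left _ hscard
      _ ≤ 2^(ℓ+1) * 2^(n-ℓ) :=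
          Nat.mul_le_mul_right _ (le_of_lt (Nat.lt_pow_succ_log_self (by norm_num) n))
      _ = 2 * 2^n := by
          rw [← pow_add]
          have h8 : ℓ + 1 + (n - ℓ) = n + 1 := by omega
          rw [h8, pow_succ]
          ring
  have hfinal : (s.card : ℝ) / ((2:ℝ)^n) / 2 ≤ 1 / n := by
    rw [div_div, div_le_div_iff₀ (by positivity) hnR]
    have h9 : (n:ℝ) * s.card ≤ 2 * 2^n := by exact_mod_cast hns
    nlinarith [h9]
  refine ⟨Q, ⟨hQ0, hQsum⟩, hQgr', ?_⟩
  refine (emd_le_cost hd0 W hWc).trans (hWcost.trans ?_)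
  have h3 : (∑ x, |push g P x - Q x|)/2 ≤ 1/n := by
    have hc : (∑ x, |push g P x - Q x|) ≤ (s.card:ℝ)/(2:ℝ)^n := by
      refine hQmov.trans ?_
      norm_num
    calc (∑ x, |push g P x - Q x|)/2 ≤ ((s.card:ℝ)/(2:ℝ)^n)/2 := by linarith
      _ ≤ 1/n := hfinal
  have h10 := hW2cost.trans h3
  rw [hℓ] at hcost1
  linarith [hcost1, h10]
end
end

section
/- Let X' be a distribution supported on a set C ⊆ {0,1}^n whose elements are pairwise at relative Hamming distance at least δ > 0, and let Y be any distribution over {0,1}^n whose Hamming earth mover's distance to X' is at most ε'. Let corr: {0,1}^n → C map each string to a closest element of C (in Hamming distance). Then the total variation distance between X' and the pushforward distribution corr(Y) is at most (2/δ)·ε'. -/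
open Finset
open scoped Classical

noncomputable section

lemma relHamming_nonneg {n : ℕ} (x y : Fin n → Bool) : 0 ≤ relHamming x y := by
  unfold relHamming; positivity

lemma relHamming_comm {n : ℕ} (x y : Fin n → Bool) : relHamming x y = relHamming y x := by
  unfold relHamming; rw [hammingDist_comm]

lemma relHamming_triangle {n : ℕ} (x y z : Fin n → Bool) :
    relHamming x z ≤ relHamming x y + relHamming y z := by
  unfold relHamming
  rw [← add_div]
  rcases Nat.eq_zero_or_pos n with h | h
  · subst h; simp
  · have hn : (0:ℝ) < n := by exact_mod_cast h
    apply div_le_div_of_nonneg_right ?_ hn.le |>.trans_eq rfl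
    exact_mod_cast hammingDist_triangle x y z


lemma tv_le_mismatch {α : Type*} [Fintype α] [DecidableEq α] (P Q : α → ℝ) (V : α → α → ℝ)
    (hV : IsCoupling P Q V) :
    tv P Q ≤ ∑ x, ∑ y, if x = y then 0 else V x y := by
  obtain ⟨hpos, h1, h2⟩ := hV
  have hf : ∀ (x : α) (f : α → ℝ),
      (∑ y, if x = y then 0 else f y) = (∑ y, f y) - f x := by
    intro x f
    have hd : (∑ y, if x = y then f y else 0) = f x := by simp
    rw [← hd, ← Finset.sum_sub_distrib]
    refine Finset.sum_congr rfl fun y _ => ?_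
    split <;> simp
  have key : ∀ x, |P x - Q x| ≤ (∑ y, if x = y then 0 else V x y)
      + (∑ y, if x = y then 0 else V y x) := by
    intro x
    have e1 : P x - Q x = (∑ y, if x = y then 0 else V x y)
        - (∑ y, if x = y then 0 else V y x) := by
      rw [← h1 x, ← h2 x, hf x (V x), hf x (fun y => V y x)]
      ring
    rw [e1]
    have n1 : 0 ≤ ∑ y, if x = y then 0 else V x y :=
      Finset.sum_nonneg fun y _ => by split <;> [rfl; exact hpos x y]
    have n2 : 0 ≤ ∑ y, if x = y then 0 else V y x :=
      Finset.sum_nonneg fun y _ => by split <;> [rfl; exact hpos y x]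
    calc |_ - _| ≤ |_| + |_| := abs_sub _ _
    _ = _ + _ := by rw [abs_of_nonneg n1, abs_of_nonneg n2]
  unfold tv
  rw [div_le_iff₀ (by norm_num : (0:ℝ) < 2)]
  calc ∑ x, |P x - Q x| ≤ ∑ x, ((∑ y, if x = y then 0 else V x y)
      + (∑ y, if x = y then 0 else V y x)) := Finset.sum_le_sum fun x _ => key x
  _ = (∑ x, ∑ y, if x = y then 0 else V x y) * 2 := by
      rw [Finset.sum_add_distrib]
      have hsw : (∑ x, ∑ y, if x = y then 0 else V y x)
          = ∑ x, ∑ y, if x = y then 0 else V x y := by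
        rw [Finset.sum_comm]
        exact Finset.sum_congr rfl fun x _ => Finset.sum_congr rfl fun y _ => by
          simp [eq_comm]
      rw [hsw]; ring

/-- correcting `Y` to the nearest element of a δ-separated set `C` supporting `X'`
yields a distribution at TV-distance at most `(2/δ)·ε'` from `X'`, where `ε'` bounds the
Hamming EMD between `X'` and `Y`. -/
theorem tv_corr_le {n : ℕ} (hn : 0 < n) (δ ε' : ℝ) (hδ : 0 < δ)
    (C : Finset (Fin n → Bool))
    (hsep : ∀ x ∈ C, ∀ y ∈ C, x ≠ y → δ ≤ relHamming x y)
    (X' Y : (Fin n → Bool) → ℝ) (hX' : IsDist X') (hY : IsDist Y)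
    (hsupp : ∀ x, X' x ≠ 0 → x ∈ C)
    (corr : (Fin n → Bool) → (Fin n → Bool))
    (hcorrC : ∀ y, corr y ∈ C)
    (hcorrMin : ∀ y, ∀ c ∈ C, relHamming y (corr y) ≤ relHamming y c)
    (hclose : emd relHamming X' Y ≤ ε') :
    tv X' (push corr Y) ≤ (2 / δ) * ε' := by
  set S : Set ℝ :=
    {c : ℝ | ∃ W, IsCoupling X' Y W ∧ c = ∑ x, ∑ y, W x y * relHamming x y} with hSdef
  -- every coupling cost bounds (δ/2)·tv
  have key : ∀ c ∈ S, (δ / 2) * tv X' (push corr Y) ≤ c := by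
    rintro c ⟨W, ⟨hWpos, hW1, hW2⟩, rfl⟩
    set V : (Fin n → Bool) → (Fin n → Bool) → ℝ :=
      fun x z => ∑ y, if corr y = z then W x y else 0 with hVdef
    have hVc : IsCoupling X' (push corr Y) V := by
      refine ⟨fun x z => Finset.sum_nonneg fun y _ => by split <;> [exact hWpos x y; rfl],
        fun x => ?_, fun z => ?_⟩
      · rw [Finset.sum_comm]
        calc (∑ y, ∑ z, if corr y = z then W x y else 0) = ∑ y, W x y := by
              refine Finset.sum_congr rfl fun y _ => ?_
              simp
          _ = X' x := hW1 x
      · rw [Finset.sum_comm]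
        calc (∑ y, ∑ x, if corr y = z then W x y else 0)
            = ∑ y, if corr y = z then Y y else 0 := by
              refine Finset.sum_congr rfl fun y _ => ?_
              by_cases h : corr y = z <;> simp [h, hW2 y]
          _ = push corr Y z := by rw [push, Finset.sum_filter]; exact Finset.sum_congr rfl fun a _ => by congr
    have htv := tv_le_mismatch _ _ V hVc
    have hmis : (∑ x, ∑ z, if x = z then 0 else V x z)
        = ∑ x, ∑ y, if x = corr y then 0 else W x y := by
      refine Finset.sum_congr rfl fun x _ => ?_
      have e0 : ∀ z, (if x = z then 0 else V x z)
          = ∑ y, if x = z then 0 else if corr y = z then W x y else 0 := by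
        intro z
        by_cases h : x = z <;> simp [h, hVdef]
      simp_rw [e0]
      rw [Finset.sum_comm]
      refine Finset.sum_congr rfl fun y _ => ?_
      have e1 : ∀ z, (if x = z then (0:ℝ) else if corr y = z then W x y else 0)
          = if corr y = z then (if x = z then 0 else W x y) else 0 := by
        intro z
        by_cases h1 : x = z <;> by_cases h2 : corr y = z <;> simp [h1, h2]
      simp_rw [e1]
      rw [Finset.sum_ite_eq]
      simp
    replace htv := le_of_le_of_eq htv hmis
    -- per-term bound
    have term : ∀ x y, (if x = corr y then (0:ℝ) else W x y)
        ≤ (2 / δ) * (W x y * relHamming x y) := by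
      intro x y
      by_cases h : x = corr y
      · rw [if_pos h]
        exact mul_nonneg (by positivity)
          (mul_nonneg (hWpos x y) (relHamming_nonneg x y))
      · rw [if_neg h]
        by_cases hx : X' x = 0
        · have hz : W x y = 0 := by
            have hsum : ∑ y, W x y = 0 := by rw [hW1 x, hx]
            have := (Finset.sum_eq_zero_iff_of_nonneg
              (fun y _ => hWpos x y)).mp hsum y (Finset.mem_univ y)
            exact this
          rw [hz]
          simp [relHamming_nonneg]
        · have hxC : x ∈ C := hsupp x hx
          have h1 : δ ≤ relHamming x (corr y) :=
            hsep x hxC (corr y) (hcorrC y) h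
          have h2 : relHamming x (corr y) ≤ relHamming x y + relHamming y (corr y) :=
            relHamming_triangle x y (corr y)
          have h3 : relHamming y (corr y) ≤ relHamming y x :=
            hcorrMin y x hxC
          have h4 : δ / 2 ≤ relHamming x y := by
            rw [relHamming_comm y x] at h3
            linarith
          have h5 : 1 ≤ (2 / δ) * relHamming x y := by
            calc (1:ℝ) = (2/δ) * (δ/2) := by field_simp
              _ ≤ (2/δ) * relHamming x y :=
                  mul_le_mul_of_nonneg_left h4 (by positivity)
          calc W x y = W x y * 1 := by ring
            _ ≤ W x y * ((2/δ) * relHamming x y) :=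
                mul_le_mul_of_nonneg_left h5 (hWpos x y)
            _ = (2/δ) * (W x y * relHamming x y) := by ring
    have hsum : tv X' (push corr Y)
        ≤ (2/δ) * (∑ x, ∑ y, W x y * relHamming x y) := by
      calc tv X' (push corr Y) ≤ ∑ x, ∑ y, if x = corr y then 0 else W x y := htv
        _ ≤ ∑ x, ∑ y, (2/δ) * (W x y * relHamming x y) :=
            Finset.sum_le_sum fun x _ => Finset.sum_le_sum fun y _ => term x y
        _ = (2/δ) * (∑ x, ∑ y, W x y * relHamming x y) := by
            simp_rw [Finset.mul_sum]
    have hc : 0 ≤ ∑ x, ∑ y, W x y * relHamming x y :=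
      Finset.sum_nonneg fun x _ => Finset.sum_nonneg fun y _ =>
        mul_nonneg (hWpos x y) (relHamming_nonneg x y)
    have := mul_le_mul_of_nonneg_left hsum (by positivity : (0:ℝ) ≤ δ/2)
    calc (δ/2) * tv X' (push corr Y)
        ≤ (δ/2) * ((2/δ) * (∑ x, ∑ y, W x y * relHamming x y)) := this
      _ = ∑ x, ∑ y, W x y * relHamming x y := by field_simp
  have hne : S.Nonempty := by
    refine ⟨∑ x, ∑ y, (X' x * Y y) * relHamming x y, fun x y => X' x * Y y,
      ⟨fun x y => mul_nonneg (hX'.1 x) (hY.1 y), fun x => ?_, fun y => ?_⟩, rfl⟩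
    · rw [← Finset.mul_sum, hY.2, mul_one]
    · rw [← Finset.sum_mul, hX'.2, one_mul]
  have hlb : (δ/2) * tv X' (push corr Y) ≤ sInf S := le_csInf hne key
  have hemd : emd relHamming X' Y = sInf S := rfl
  have hfin : (δ/2) * tv X' (push corr Y) ≤ ε' := by
    rw [← hemd] at hlb; linarith
  calc tv X' (push corr Y) = (2/δ) * ((δ/2) * tv X' (push corr Y)) := by field_simp
    _ ≤ (2/δ) * ε' := mul_le_mul_of_nonneg_left hfin (by positivity)
end
end

section
/- Suppose a distribution X over {0,1}^n is ε-far, in Hamming earth mover's distance, from every distribution with support size at most m. Then for every finite set W of strings with |W| ≤ m, the probability that a sample x ~ X is at relative Hamming distance at least ε/2 from every element of W is at least ε/2. -/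
open Finset
open scoped Classical

noncomputable section

lemma push_isDist {α : Type*} [Fintype α] (f : α → α) (X : α → ℝ) (hX : IsDist X) :
    IsDist (push f X) := by
  constructor
  · intro y; exact Finset.sum_nonneg fun x _ => hX.1 x
  · rw [← hX.2]
    exact Finset.sum_fiberwise _ _ _

lemma emd_le_push {α : Type*} [Fintype α] (d : α → α → ℝ) (hd : ∀ x y, 0 ≤ d x y)
    (X : α → ℝ) (hX : IsDist X) (f : α → α) :
    emd d X (push f X) ≤ ∑ x, X x * d x (f x) := by
  apply csInf_le
  · refine ⟨0, ?_⟩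
    rintro c ⟨C, hC, rfl⟩
    exact Finset.sum_nonneg fun x _ => Finset.sum_nonneg fun y _ =>
      mul_nonneg (hC.1 x y) (hd x y)
  · refine ⟨fun x y => if y = f x then X x else 0, ⟨?_, ?_, ?_⟩, ?_⟩
    · intro x y; dsimp; split <;> simp [hX.1 x]
    · intro x; simp
    · intro y
      simp only [push, Finset.sum_filter]
      apply Finset.sum_congr rfl
      intro x _
      rcases eq_or_ne (f x) y with h | h
      · simp [h]
      · simp [h, (Ne.symm h : y ≠ f x)]
    · apply Finset.sum_congr rfl
      intro x _
      simp [ite_mul]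

lemma suppCard_push_le {α : Type*} [Fintype α] (f : α → α) (X : α → ℝ)
    (W : Finset α) (hf : ∀ x, f x ∈ W) : suppCard (push f X) ≤ W.card := by
  apply Finset.card_le_card
  intro y hy
  simp only [Finset.mem_filter, Finset.mem_univ, true_and] at hy
  obtain ⟨x, hx, hxne⟩ := Finset.exists_ne_zero_of_sum_ne_zero hy
  simp only [Finset.mem_filter] at hx
  exact hx.2 ▸ hf x

lemma relHamming_le_one {n : ℕ} (hn : 0 < n) (x y : Fin n → Bool) :
    relHamming x y ≤ 1 := by
  unfold relHamming
  rw [div_le_one (by exact_mod_cast hn)]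
  exact_mod_cast (hammingDist_le_card_fintype).trans_eq (by simp)


/-- if `X` is ε-far in Hamming EMD from every distribution of support size at most
`m`, then for every set `W` of at most `m` strings, the `X`-probability of being (ε/2)-H-far
from all of `W` is at least ε/2. -/
theorem far_from_small_support {n m : ℕ} (hn : 0 < n) (hm : 0 < m) (ε : ℝ)
    (X : (Fin n → Bool) → ℝ) (hX : IsDist X)
    (hfar : ∀ Q : (Fin n → Bool) → ℝ, IsDist Q → suppCard Q ≤ m →
      ε < emd relHamming X Q)
    (W : Finset (Fin n → Bool)) (hW : W.card ≤ m) :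
    ε / 2 ≤ ∑ x ∈ univ.filter (fun x => ∀ w ∈ W, ε / 2 ≤ relHamming x w), X x := by
  rcases le_or_gt ε 0 with hε | hε
  · exact (by linarith : ε / 2 ≤ (0:ℝ)).trans
      (Finset.sum_nonneg fun x _ => hX.1 x)
  rcases W.eq_empty_or_nonempty with rfl | ⟨w0, hw0⟩
  · -- W empty: the sum is 1, and ε < 1 follows from a point-mass distribution
    have hS : (univ.filter fun x : Fin n → Bool =>
        ∀ w ∈ (∅ : Finset (Fin n → Bool)), ε / 2 ≤ relHamming x w) = univ := by
      apply Finset.filter_true_of_mem; intro x _; simp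
    rw [hS, hX.2]
    set x0 : Fin n → Bool := fun _ => false
    have hQ := push_isDist (fun _ => x0) X hX
    have hsupp : suppCard (push (fun _ => x0) X) ≤ m := by
      refine le_trans (suppCard_push_le _ X {x0} (fun x => by simp)) ?_
      simpa using Nat.one_le_iff_ne_zero.mpr hm.ne'
    have h1 := hfar _ hQ hsupp
    have h2 := emd_le_push relHamming (fun x y => relHamming_nonneg x y) X hX (fun _ => x0)
    have h3 : ∑ x, X x * relHamming x x0 ≤ 1 := by
      rw [← hX.2]
      refine Finset.sum_le_sum fun x _ => ?_
      calc X x * relHamming x x0 ≤ X x * 1 :=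
            mul_le_mul_of_nonneg_left (relHamming_le_one hn x x0) (hX.1 x)
        _ = X x := mul_one _
    linarith
  · by_contra hcon
    push_neg at hcon
    set P : (Fin n → Bool) → Prop := fun x => ∀ w ∈ W, ε / 2 ≤ relHamming x w with hP
    set p : ℝ := ∑ x ∈ univ.filter P, X x with hp
    have hp0 : 0 ≤ p := Finset.sum_nonneg fun x _ => hX.1 x
    have hsplit : p + ∑ x ∈ univ.filter (fun x => ¬ P x), X x = 1 := by
      rw [hp, Finset.sum_filter_add_sum_filter_not, hX.2]
    -- define the rounding map
    set f : (Fin n → Bool) → (Fin n → Bool) := fun x =>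
      if h : ∃ w ∈ W, relHamming x w < ε / 2 then h.choose else w0 with hf
    have hfW : ∀ x, f x ∈ W := by
      intro x
      rw [hf]; dsimp only
      split
      · next h => exact h.choose_spec.1
      · exact hw0
    have hQ := push_isDist f X hX
    have hsupp : suppCard (push f X) ≤ m := (suppCard_push_le f X W hfW).trans hW
    have h1 := hfar _ hQ hsupp
    have h2 := emd_le_push relHamming (fun x y => relHamming_nonneg x y) X hX f
    have h3 : ∑ x, X x * relHamming x (f x) ≤
        ∑ x, (if P x then X x else X x * (ε / 2)) := by
      refine Finset.sum_le_sum fun x _ => ?_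
      by_cases hx : P x
      · rw [if_pos hx]
        calc X x * relHamming x (f x) ≤ X x * 1 :=
              mul_le_mul_of_nonneg_left (relHamming_le_one hn x (f x)) (hX.1 x)
          _ = X x := mul_one _
      · rw [if_neg hx]
        have hex : ∃ w ∈ W, relHamming x w < ε / 2 := by
          simp only [hP, not_forall, not_le, exists_prop] at hx
          obtain ⟨w, hwW, hwlt⟩ := hx
          exact ⟨w, hwW, hwlt⟩
        have hfx : relHamming x (f x) < ε / 2 := by
          rw [hf]; dsimp only
          rw [dif_pos hex]
          exact hex.choose_spec.2
        exact mul_le_mul_of_nonneg_left hfx.le (hX.1 x)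
    have h4 : ∑ x, (if P x then X x else X x * (ε / 2)) =
        p + (∑ x ∈ univ.filter (fun x => ¬ P x), X x) * (ε / 2) := by
      rw [Finset.sum_ite, ← Finset.sum_mul, hp]
    have h5 : (∑ x ∈ univ.filter (fun x => ¬ P x), X x) * (ε / 2) ≤ ε / 2 := by
      have : ∑ x ∈ univ.filter (fun x => ¬ P x), X x ≤ 1 := by linarith
      nlinarith
    -- p < ε/2 from hcon
    have hplt : p < ε / 2 := hcon
    linarith
end
end

section
/- Let X and Y be distributions over {0,1}^n with Hamming earth mover's distance greater than ε, where Y has support size at most m'' and X has support size at most m'. Fix a coordinate set J ⊆ [n] such that for every x in the support of X and every y in the support of Y, Δ_H(x_J, y_J) ≥ 0.5·Δ_H(x,y) − 0.2ε (relative Hamming distance computed on the coordinates of J). Then the Hamming earth mover's distance between the projected distributions X_J and Y_J (over {0,1}^{|J|}) is greater than 0.3ε, and hence their total variation distance is also greater than 0.3ε. -/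
open Finset
open scoped Classical

noncomputable section

section Helpers
set_option linter.unusedSectionVars false

variable {α β : Type*} [Fintype α] [Fintype β]

lemma fiber_sum (f : α → β) (P : α → ℝ) (g : β → ℝ) :
    ∑ x, P x * g (f x) = ∑ u, push f P u * g u := by
  rw [← Finset.sum_fiberwise univ f (fun x => P x * g (f x))]
  refine Finset.sum_congr rfl fun u _ => ?_
  rw [push, Finset.sum_mul]
  exact Finset.sum_congr rfl fun x hx => by rw [(mem_filter.1 hx).2]

set_option linter.unusedSectionVars false in
lemma push_isDist_s15 (f : α → β) {P : α → ℝ} (hP : IsDist P) : IsDist (push f P) := by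
  refine ⟨fun u => Finset.sum_nonneg fun x _ => hP.1 x, ?_⟩
  have := fiber_sum f P (fun _ => (1:ℝ))
  simpa [hP.2] using this.symm

set_option linter.unusedSectionVars false in
lemma le_push (f : α → β) {P : α → ℝ} (hP : ∀ x, 0 ≤ P x) (x : α) :
    P x ≤ push f P (f x) :=
  Finset.single_le_sum (fun y _ => hP y) (by simp)

lemma emd_bddBelow' (d : α → α → ℝ) (hd : ∀ x y, 0 ≤ d x y) (P Q : α → ℝ) :
    BddBelow {c : ℝ | ∃ W, IsCoupling P Q W ∧ c = ∑ x, ∑ y, W x y * d x y} := by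
  refine ⟨0, fun c hc => ?_⟩
  obtain ⟨W, hW, rfl⟩ := hc
  exact Finset.sum_nonneg fun x _ => Finset.sum_nonneg fun y _ =>
    mul_nonneg (hW.1 x y) (hd x y)

lemma emd_le' (d : α → α → ℝ) (hd : ∀ x y, 0 ≤ d x y) (P Q : α → ℝ)
    {W : α → α → ℝ} (hW : IsCoupling P Q W) :
    emd d P Q ≤ ∑ x, ∑ y, W x y * d x y :=
  csInf_le (emd_bddBelow' d hd P Q) ⟨W, hW, rfl⟩

lemma prod_coupling {P Q : α → ℝ} (hP : IsDist P) (hQ : IsDist Q) :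
    IsCoupling P Q (fun x y => P x * Q y) := by
  refine ⟨fun x y => mul_nonneg (hP.1 x) (hQ.1 y), fun x => ?_, fun y => ?_⟩
  · rw [← Finset.mul_sum, hQ.2, mul_one]
  · rw [← Finset.sum_mul, hP.2, one_mul]

lemma lift_coupling (f : α → β) {P Q : α → ℝ} (hP : IsDist P) (hQ : IsDist Q)
    {W' : β → β → ℝ} (hW' : IsCoupling (push f P) (push f Q) W') (d : β → β → ℝ) :
    ∃ W : α → α → ℝ, IsCoupling P Q W ∧
      ∑ x, ∑ y, W x y * d (f x) (f y) = ∑ u, ∑ v, W' u v * d u v := by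
  set P' := push f P with hP'
  set Q' := push f Q with hQ'
  have hP'nn : ∀ u, 0 ≤ P' u := fun u => Finset.sum_nonneg fun x _ => hP.1 x
  have hQ'nn : ∀ v, 0 ≤ Q' v := fun v => Finset.sum_nonneg fun x _ => hQ.1 x
  have hWP0 : ∀ u v, P' u = 0 → W' u v = 0 := by
    intro u v h
    have h1 : W' u v ≤ ∑ v', W' u v' :=
      Finset.single_le_sum (fun v' _ => hW'.1 u v') (mem_univ v)
    rw [hW'.2.1 u, h] at h1
    linarith [hW'.1 u v]
  have hWQ0 : ∀ u v, Q' v = 0 → W' u v = 0 := by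
    intro u v h
    have h1 : W' u v ≤ ∑ u', W' u' v :=
      Finset.single_le_sum (fun u' _ => hW'.1 u' v) (mem_univ u)
    rw [hW'.2.2 v, h] at h1
    linarith [hW'.1 u v]
  have hPx0 : ∀ x, P' (f x) = 0 → P x = 0 := fun x h =>
    le_antisymm (h ▸ le_push f hP.1 x) (hP.1 x)
  have hQy0 : ∀ y, Q' (f y) = 0 → Q y = 0 := fun y h =>
    le_antisymm (h ▸ le_push f hQ.1 y) (hQ.1 y)
  refine ⟨fun x y => P x * (Q y * ((P' (f x))⁻¹ * ((Q' (f y))⁻¹ * W' (f x) (f y)))),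
    ⟨fun x y => ?_, fun x => ?_, fun y => ?_⟩, ?_⟩
  · exact mul_nonneg (hP.1 x) (mul_nonneg (hQ.1 y) (mul_nonneg (inv_nonneg.2 (hP'nn _))
      (mul_nonneg (inv_nonneg.2 (hQ'nn _)) (hW'.1 _ _))))
  · have step : ∑ y, Q y * ((Q' (f y))⁻¹ * W' (f x) (f y)) =
        ∑ v, Q' v * ((Q' v)⁻¹ * W' (f x) v) :=
      fiber_sum f Q (fun v => (Q' v)⁻¹ * W' (f x) v)
    have absQ : ∀ v, Q' v * ((Q' v)⁻¹ * W' (f x) v) = W' (f x) v := by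
      intro v
      by_cases h : Q' v = 0
      · simp [h, hWQ0 _ _ h]
      · field_simp
    calc ∑ y, P x * (Q y * ((P' (f x))⁻¹ * ((Q' (f y))⁻¹ * W' (f x) (f y))))
        = P x * (P' (f x))⁻¹ * ∑ y, Q y * ((Q' (f y))⁻¹ * W' (f x) (f y)) := by
          rw [Finset.mul_sum]; exact Finset.sum_congr rfl fun y _ => by ring
      _ = P x * (P' (f x))⁻¹ * ∑ v, W' (f x) v := by
          rw [step]; congr 1; exact Finset.sum_congr rfl fun v _ => absQ v
      _ = P x * ((P' (f x))⁻¹ * P' (f x)) := by rw [hW'.2.1]; ring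
      _ = P x := by
          by_cases h : P' (f x) = 0
          · simp [h, hPx0 x h]
          · rw [inv_mul_cancel₀ h, mul_one]
  · have step : ∑ x, P x * ((P' (f x))⁻¹ * W' (f x) (f y)) =
        ∑ u, P' u * ((P' u)⁻¹ * W' u (f y)) :=
      fiber_sum f P (fun u => (P' u)⁻¹ * W' u (f y))
    have absP : ∀ u, P' u * ((P' u)⁻¹ * W' u (f y)) = W' u (f y) := by
      intro u
      by_cases h : P' u = 0
      · simp [h, hWP0 _ _ h]
      · field_simp
    calc ∑ x, P x * (Q y * ((P' (f x))⁻¹ * ((Q' (f y))⁻¹ * W' (f x) (f y))))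
        = Q y * (Q' (f y))⁻¹ * ∑ x, P x * ((P' (f x))⁻¹ * W' (f x) (f y)) := by
          rw [Finset.mul_sum]; exact Finset.sum_congr rfl fun x _ => by ring
      _ = Q y * (Q' (f y))⁻¹ * ∑ u, W' u (f y) := by
          rw [step]; congr 1; exact Finset.sum_congr rfl fun u _ => absP u
      _ = Q y * ((Q' (f y))⁻¹ * Q' (f y)) := by rw [hW'.2.2]; ring
      _ = Q y := by
          by_cases h : Q' (f y) = 0
          · simp [h, hQy0 y h]
          · rw [inv_mul_cancel₀ h, mul_one]
  · set F : β → β → ℝ := fun u v => (P' u)⁻¹ * ((Q' v)⁻¹ * (W' u v * d u v)) with hF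
    have inner : ∀ x, ∑ y, Q y * F (f x) (f y) = ∑ v, Q' v * F (f x) v := fun x =>
      fiber_sum f Q (fun v => F (f x) v)
    have outer : ∑ x, P x * (∑ v, Q' v * F (f x) v) = ∑ u, P' u * ∑ v, Q' v * F u v :=
      fiber_sum f P (fun u => ∑ v, Q' v * F u v)
    have abs : ∀ u v, P' u * (Q' v * F u v) = W' u v * d u v := by
      intro u v
      by_cases h1 : P' u = 0
      · simp [hF, h1, hWP0 _ _ h1]
      · by_cases h2 : Q' v = 0
        · simp [hF, h2, hWQ0 _ _ h2]
        · simp only [hF]; field_simp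
    calc ∑ x, ∑ y, P x * (Q y * ((P' (f x))⁻¹ * ((Q' (f y))⁻¹ * W' (f x) (f y)))) * d (f x) (f y)
        = ∑ x, P x * ∑ y, Q y * F (f x) (f y) := by
          refine Finset.sum_congr rfl fun x _ => ?_
          rw [Finset.mul_sum]
          exact Finset.sum_congr rfl fun y _ => by simp only [hF]; ring
      _ = ∑ u, P' u * ∑ v, Q' v * F u v := by
          rw [← outer]; exact Finset.sum_congr rfl fun x _ => by rw [inner x]
      _ = ∑ u, ∑ v, W' u v * d u v := by
          refine Finset.sum_congr rfl fun u _ => ?_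
          rw [Finset.mul_sum]
          exact Finset.sum_congr rfl fun v _ => abs u v

end Helpers

lemma emd_le_tv {α : Type*} [Fintype α] (d : α → α → ℝ)
    (hdn : ∀ x y, 0 ≤ d x y) (hd0 : ∀ x, d x x = 0) (hd1 : ∀ x y, d x y ≤ 1)
    {P Q : α → ℝ} (hP : IsDist P) (hQ : IsDist Q) :
    emd d P Q ≤ tv P Q := by
  set m : α → ℝ := fun x => min (P x) (Q x) with hm
  have hmnn : ∀ x, 0 ≤ m x := fun x => le_min (hP.1 x) (hQ.1 x)
  have hmP : ∀ x, m x ≤ P x := fun x => min_le_left _ _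
  have hmQ : ∀ x, m x ≤ Q x := fun x => min_le_right _ _
  set s : ℝ := 1 - ∑ x, m x with hs
  have htv : tv P Q = s := by
    have habs : ∀ x, |P x - Q x| = P x + Q x - 2 * m x := by
      intro x
      rcases le_total (P x) (Q x) with h | h
      · rw [abs_of_nonpos (by linarith), hm]; simp [min_eq_left h]; ring
      · rw [abs_of_nonneg (by linarith), hm]; simp [min_eq_right h]; ring
    rw [tv, Finset.sum_congr rfl fun x _ => habs x]
    rw [Finset.sum_sub_distrib, Finset.sum_add_distrib, hP.2, hQ.2, ← Finset.mul_sum]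
    ring
  have hsumPm : ∑ x, (P x - m x) = s := by
    rw [Finset.sum_sub_distrib, hP.2, hs]
  have hsumQm : ∑ x, (Q x - m x) = s := by
    rw [Finset.sum_sub_distrib, hQ.2, hs]
  have hsnn : 0 ≤ s := by
    rw [← hsumPm]; exact Finset.sum_nonneg fun x _ => by linarith [hmP x]
  rw [htv]
  by_cases hs0 : s = 0
  · -- P = Q; use diagonal coupling
    have hPQ : ∀ x, P x = m x := by
      intro x
      have : ∀ y ∈ univ, 0 ≤ P y - m y := fun y _ => by linarith [hmP y]
      have h0 : ∑ x, (P x - m x) = 0 := by rw [hsumPm, hs0]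
      have := (Finset.sum_eq_zero_iff_of_nonneg this).1 h0 x (mem_univ x)
      linarith
    have hQm : ∀ x, Q x = m x := by
      intro x
      have : ∀ y ∈ univ, 0 ≤ Q y - m y := fun y _ => by linarith [hmQ y]
      have h0 : ∑ x, (Q x - m x) = 0 := by rw [hsumQm, hs0]
      have := (Finset.sum_eq_zero_iff_of_nonneg this).1 h0 x (mem_univ x)
      linarith
    have hcoup : IsCoupling P Q (fun x y => if x = y then P x else 0) := by
      refine ⟨fun x y => ?_, fun x => ?_, fun y => ?_⟩
      · dsimp only; split <;> simp [hP.1 x]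
      · simp
      · rw [Finset.sum_ite_eq' univ y (fun x => P x)]; simp [hPQ y, hQm y]
    have := emd_le' d hdn P Q hcoup
    have hc : ∑ x, ∑ y, (if x = y then P x else 0) * d x y = 0 := by
      refine Finset.sum_eq_zero fun x _ => Finset.sum_eq_zero fun y _ => ?_
      by_cases h : x = y
      · subst h; simp [hd0]
      · simp [h]
    rw [hc] at this
    linarith [this, hs0.ge]
  · have hspos : 0 < s := lt_of_le_of_ne hsnn (Ne.symm hs0)
    set W : α → α → ℝ := fun x y =>
      (if x = y then m x else 0) + (P x - m x) * (Q y - m y) / s with hW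
    have hWnn : ∀ x y, 0 ≤ W x y := by
      intro x y
      have h1 : (0:ℝ) ≤ if x = y then m x else 0 := by split <;> simp [hmnn x]
      have h2 : 0 ≤ (P x - m x) * (Q y - m y) / s :=
        div_nonneg (mul_nonneg (by linarith [hmP x]) (by linarith [hmQ y])) hsnn
      rw [hW]; exact add_nonneg h1 h2
    have hcoup : IsCoupling P Q W := by
      refine ⟨hWnn, fun x => ?_, fun y => ?_⟩
      · rw [hW]
        simp only [Finset.sum_add_distrib]
        rw [Finset.sum_ite_eq univ x (fun _ => m x)]
        have : ∑ y, (P x - m x) * (Q y - m y) / s = (P x - m x) * s / s := by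
          rw [← hsumQm, Finset.mul_sum, Finset.sum_div]
        rw [this, mul_div_assoc, div_self hs0, mul_one]
        simp
      · rw [hW]
        simp only [Finset.sum_add_distrib]
        rw [Finset.sum_ite_eq' univ y (fun x => m x)]
        have : ∑ x, (P x - m x) * (Q y - m y) / s = s * (Q y - m y) / s := by
          rw [← hsumPm, Finset.sum_mul, Finset.sum_div]
        rw [this, mul_comm, mul_div_assoc, div_self hs0, mul_one]
        simp
    refine le_trans (emd_le' d hdn P Q hcoup) ?_
    have hcost : ∑ x, ∑ y, W x y * d x y ≤ s := by
      have hb : ∀ x y, W x y * d x y ≤ (P x - m x) * (Q y - m y) / s := by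
        intro x y
        by_cases h : x = y
        · subst h
          rw [hW]; simp [hd0 x]
          exact div_nonneg (mul_nonneg (by linarith [hmP x]) (by linarith [hmQ x])) hsnn
        · rw [hW]; simp only [if_neg h, zero_add]
          calc (P x - m x) * (Q y - m y) / s * d x y
              ≤ (P x - m x) * (Q y - m y) / s * 1 := by
                apply mul_le_mul_of_nonneg_left (hd1 x y)
                exact div_nonneg (mul_nonneg (by linarith [hmP x]) (by linarith [hmQ y])) hsnn
            _ = _ := by ring
      calc ∑ x, ∑ y, W x y * d x y
          ≤ ∑ x, ∑ y, (P x - m x) * (Q y - m y) / s := by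
            exact Finset.sum_le_sum fun x _ => Finset.sum_le_sum fun y _ => hb x y
        _ = (∑ x, (P x - m x)) * (∑ y, (Q y - m y)) / s := by
            simp only [div_eq_mul_inv, ← Finset.sum_mul, ← Finset.mul_sum]
        _ = s := by rw [hsumPm, hsumQm, mul_div_assoc, div_self hs0, mul_one]
    exact hcost
/-- if `X` and `Y` are far in Hamming EMD and the coordinate set `J` roughly
preserves pairwise distances on their supports, then the projected distributions `X_J`, `Y_J`
are `0.3ε`-far both in Hamming EMD and in total variation distance. -/
theorem projected_distributions_far {n m' m'' : ℕ} (hn : 0 < n) (ε : ℝ) (hε : 0 < ε)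
    (X Y : (Fin n → Bool) → ℝ) (hX : IsDist X) (hY : IsDist Y)
    (hmX : suppCard X ≤ m') (hmY : suppCard Y ≤ m'')
    (hfar : ε < emd relHamming X Y)
    (J : Finset (Fin n))
    (hJ : ∀ x y : Fin n → Bool, X x ≠ 0 → Y y ≠ 0 →
      0.5 * relHamming x y - 0.2 * ε ≤
        (hammingDist (fun i : J => x i.1) (fun i : J => y i.1) : ℝ) / J.card) :
    0.3 * ε < emd (fun u v : (J → Bool) => (hammingDist u v : ℝ) / J.card)
        (push (fun (x : Fin n → Bool) (i : J) => x i.1) X)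
        (push (fun (x : Fin n → Bool) (i : J) => x i.1) Y) ∧
    0.3 * ε < tv (push (fun (x : Fin n → Bool) (i : J) => x i.1) X)
        (push (fun (x : Fin n → Bool) (i : J) => x i.1) Y) := by
  classical
  set f : (Fin n → Bool) → (J → Bool) := fun x (i : J) => x i.1 with hf
  set d' : (J → Bool) → (J → Bool) → ℝ :=
    fun u v => (hammingDist u v : ℝ) / J.card with hd'
  have hd'nn : ∀ u v, 0 ≤ d' u v := fun u v =>
    div_nonneg (Nat.cast_nonneg _) (Nat.cast_nonneg _)
  have hPd : IsDist (push f X) := push_isDist_s15 f hX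
  have hQd : IsDist (push f Y) := push_isDist_s15 f hY
  set E : ℝ := emd relHamming X Y with hE
  -- every coupling of the projections has cost at least (E - 0.4 ε)/2
  have key : ∀ c ∈ {c : ℝ | ∃ W, IsCoupling (push f X) (push f Y) W ∧
      c = ∑ u, ∑ v, W u v * d' u v}, (E - 0.4 * ε) / 2 ≤ c := by
    rintro c ⟨W', hW', rfl⟩
    obtain ⟨W, hW, hcost⟩ := lift_coupling f hX hY hW' d'
    have hX0 : ∀ x y, X x = 0 → W x y = 0 := by
      intro x y h
      have h1 : W x y ≤ ∑ y', W x y' :=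
        Finset.single_le_sum (fun y' _ => hW.1 x y') (mem_univ y)
      rw [hW.2.1 x, h] at h1
      linarith [hW.1 x y]
    have hY0 : ∀ x y, Y y = 0 → W x y = 0 := by
      intro x y h
      have h1 : W x y ≤ ∑ x', W x' y :=
        Finset.single_le_sum (fun x' _ => hW.1 x' y) (mem_univ x)
      rw [hW.2.2 y, h] at h1
      linarith [hW.1 x y]
    have hterm : ∀ x y, W x y * relHamming x y ≤
        W x y * (2 * d' (f x) (f y) + 0.4 * ε) := by
      intro x y
      by_cases h : W x y = 0
      · rw [h]; simp
      · have hx : X x ≠ 0 := fun h' => h (hX0 x y h')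
        have hy : Y y ≠ 0 := fun h' => h (hY0 x y h')
        have := hJ x y hx hy
        have hrel : relHamming x y ≤ 2 * d' (f x) (f y) + 0.4 * ε := by
          simp only [hd', hf]
          norm_num at this ⊢
          linarith
        exact mul_le_mul_of_nonneg_left hrel (hW.1 x y)
    have hWsum : ∑ x, ∑ y, W x y = 1 := by
      rw [Finset.sum_congr rfl fun x _ => hW.2.1 x, hX.2]
    have hEle : E ≤ 2 * (∑ u, ∑ v, W' u v * d' u v) + 0.4 * ε := by
      calc E ≤ ∑ x, ∑ y, W x y * relHamming x y :=
            emd_le' relHamming (fun x y => div_nonneg (Nat.cast_nonneg _) (Nat.cast_nonneg _)) X Y hW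
        _ ≤ ∑ x, ∑ y, W x y * (2 * d' (f x) (f y) + 0.4 * ε) :=
            Finset.sum_le_sum fun x _ => Finset.sum_le_sum fun y _ => hterm x y
        _ = 2 * (∑ x, ∑ y, W x y * d' (f x) (f y)) + 0.4 * ε * (∑ x, ∑ y, W x y) := by
            rw [Finset.mul_sum, Finset.mul_sum, ← Finset.sum_add_distrib]
            refine Finset.sum_congr rfl fun x _ => ?_
            rw [Finset.mul_sum, Finset.mul_sum, ← Finset.sum_add_distrib]
            exact Finset.sum_congr rfl fun y _ => by ring
        _ = 2 * (∑ u, ∑ v, W' u v * d' u v) + 0.4 * ε := by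
            rw [hcost, hWsum, mul_one]
    linarith
  have hne : Set.Nonempty {c : ℝ | ∃ W, IsCoupling (push f X) (push f Y) W ∧
      c = ∑ u, ∑ v, W u v * d' u v} :=
    ⟨_, fun u v => push f X u * push f Y v, prod_coupling hPd hQd, rfl⟩
  have hemd : (E - 0.4 * ε) / 2 ≤ emd d' (push f X) (push f Y) :=
    le_csInf hne key
  have hlt : 0.3 * ε < (E - 0.4 * ε) / 2 := by
    rw [hE] at *
    linarith
  have hemd' : 0.3 * ε < emd d' (push f X) (push f Y) := lt_of_lt_of_le hlt hemd
  have htvle : emd d' (push f X) (push f Y) ≤ tv (push f X) (push f Y) := by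
    refine emd_le_tv d' hd'nn (fun u => ?_) (fun u v => ?_) hPd hQd
    · simp [hd']
    · rw [hd']
      refine div_le_one_of_le₀ ?_ (Nat.cast_nonneg _)
      have h1 : hammingDist u v ≤ Fintype.card J := hammingDist_le_card_fintype
      have h2 : Fintype.card J = J.card := Fintype.card_coe J
      exact_mod_cast h2 ▸ h1
  exact ⟨hemd', lt_of_lt_of_le hemd' htvle⟩
end
end

section
/- Let m ≤ 2^{cn} for a constant c < 1 chosen so that the Hamming ball of relative radius ε around any set of m strings covers at most half of {0,1}^n (this holds whenever H₂(ε) + c < 1, where H₂ is the binary entropy function). Then the uniform distribution over {0,1}^n is at Hamming earth mover's distance at least ε/2 from every distribution over {0,1}^n with support size at most m. -/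
open Finset
open scoped Classical

noncomputable section

/-- if Hamming balls of relative radius ε around any `m` strings cover at most
half of `{0,1}^n`, then the uniform distribution is at Hamming EMD at least `ε/2` from every
distribution with support size at most `m`. -/
theorem uniform_far_from_small_support {n m : ℕ} (hn : 0 < n) (c ε : ℝ) (hc : c < 1)
    (hm : (m : ℝ) ≤ 2 ^ (c * n))
    (hcover : ∀ S : Finset (Fin n → Bool), S.card ≤ m →
      2 * (univ.filter (fun x : Fin n → Bool => ∃ s ∈ S, relHamming x s ≤ ε)).card ≤ 2 ^ n) :
    ∀ Q : (Fin n → Bool) → ℝ, IsDist Q → suppCard Q ≤ m →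
      ε / 2 ≤ emd relHamming (fun _ => (1 : ℝ) / 2 ^ n) Q := by

  intro Q hQ hsupp
  have hcard : (Fintype.card (Fin n → Bool) : ℝ) = 2 ^ n := by
    simp [Fintype.card_fun]
  have hpow : (0:ℝ) < 2 ^ n := by positivity
  -- nonemptiness of the coupling set
  have hne : {c : ℝ | ∃ W, IsCoupling (fun _ => (1 : ℝ) / 2 ^ n) Q W ∧
      c = ∑ x, ∑ y, W x y * relHamming x y}.Nonempty := by
    refine ⟨_, (fun _ y => (1 : ℝ) / 2 ^ n * Q y), ⟨?_, ?_, ?_⟩, rfl⟩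
    · intro x y
      have := hQ.1 y
      positivity
    · intro x
      rw [← Finset.mul_sum, hQ.2, mul_one]
    · intro y
      rw [Finset.sum_const, nsmul_eq_mul, ← mul_assoc]
      have : (Fintype.card (Fin n → Bool) : ℝ) * (1 / 2 ^ n) = 1 := by
        rw [hcard]; field_simp
      simpa [Finset.card_univ] using congrArg (· * Q y) this
  apply le_csInf hne
  rintro c ⟨W, ⟨hW0, hW1, hW2⟩, rfl⟩
  have hd : ∀ x y : Fin n → Bool, 0 ≤ relHamming x y := by
    intro x y; unfold relHamming; positivity
  have hterm : ∀ x y : Fin n → Bool, 0 ≤ W x y * relHamming x y := fun x y =>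
    mul_nonneg (hW0 x y) (hd x y)
  by_cases hε : ε ≤ 0
  · have : (0:ℝ) ≤ ∑ x, ∑ y, W x y * relHamming x y :=
      Finset.sum_nonneg fun x _ => Finset.sum_nonneg fun y _ => hterm x y
    linarith
  push_neg at hε
  set S : Finset (Fin n → Bool) := univ.filter (fun x => Q x ≠ 0) with hSdef
  set B : Finset (Fin n → Bool) :=
    univ.filter (fun x : Fin n → Bool => ∃ s ∈ S, relHamming x s ≤ ε) with hBdef
  have hB : 2 * B.card ≤ 2 ^ n := hcover S hsupp
  -- for x outside B, inner sum is at least ε / 2^n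
  have key : ∀ x ∈ Bᶜ, ε / 2 ^ n ≤ ∑ y, W x y * relHamming x y := by
    intro x hx
    have hxB : x ∉ B := Finset.mem_compl.mp hx
    have step : ∀ y : Fin n → Bool, ε * W x y ≤ W x y * relHamming x y := by
      intro y
      by_cases hy : Q y = 0
      · have hW0y : W x y = 0 := by
          have hsum : ∑ x', W x' y = 0 := by rw [hW2 y, hy]
          have := (Finset.sum_eq_zero_iff_of_nonneg (fun x' _ => hW0 x' y)).mp hsum
          exact this x (Finset.mem_univ x)
        simp [hW0y]
      · have hyS : y ∈ S := by simp [hSdef, hy]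
        have hdxy : ε ≤ relHamming x y := by
          by_contra h
          push_neg at h
          refine hxB ?_
          rw [hBdef, Finset.mem_filter]
          exact ⟨Finset.mem_univ x, y, hyS, le_of_lt h⟩
        calc ε * W x y ≤ relHamming x y * W x y :=
              mul_le_mul_of_nonneg_right hdxy (hW0 x y)
          _ = W x y * relHamming x y := mul_comm _ _
    calc ε / 2 ^ n = ε * ((1:ℝ) / 2 ^ n) := by ring
      _ = ε * ∑ y, W x y := by rw [hW1 x]
      _ = ∑ y, ε * W x y := Finset.mul_sum _ _ _
      _ ≤ ∑ y, W x y * relHamming x y := Finset.sum_le_sum fun y _ => step y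
  have hsub : ∑ x ∈ Bᶜ, ∑ y, W x y * relHamming x y ≤
      ∑ x, ∑ y, W x y * relHamming x y :=
    Finset.sum_le_sum_of_subset_of_nonneg (Finset.subset_univ _)
      (fun x _ _ => Finset.sum_nonneg fun y _ => hterm x y)
  have hlow : (Bᶜ.card : ℝ) * (ε / 2 ^ n) ≤ ∑ x ∈ Bᶜ, ∑ y, W x y * relHamming x y := by
    calc (Bᶜ.card : ℝ) * (ε / 2 ^ n) = ∑ _x ∈ Bᶜ, ε / 2 ^ n := by
          rw [Finset.sum_const, nsmul_eq_mul]
      _ ≤ _ := Finset.sum_le_sum key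
  have hcompl : (2:ℝ) ^ n / 2 ≤ (Bᶜ.card : ℝ) := by
    have h1 : Bᶜ.card = Fintype.card (Fin n → Bool) - B.card := Finset.card_compl B
    have h2 : (B.card : ℝ) ≤ 2 ^ n / 2 := by
      have : (2 * B.card : ℝ) ≤ 2 ^ n := by exact_mod_cast hB
      linarith
    have h3 : B.card ≤ Fintype.card (Fin n → Bool) := Finset.card_le_univ B
    have h4 : (Bᶜ.card : ℝ) = 2 ^ n - B.card := by
      rw [h1, Nat.cast_sub h3, hcard]
    linarith
  have hfinal : ε / 2 ≤ (Bᶜ.card : ℝ) * (ε / 2 ^ n) := by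
    have := mul_le_mul_of_nonneg_right hcompl (le_of_lt (div_pos hε hpow))
    calc ε / 2 = 2 ^ n / 2 * (ε / 2 ^ n) := by field_simp
      _ ≤ _ := this
  linarith
end
end
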